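/- Define Φ(C) = C − C²/tr(C) for nonzero positive semidefinite C ∈ ℂ^{n×n}, and let Φ^{∘k} denote k-fold composition. For any positive semidefinite matrix C of rank r ≥ 2, the limit lim_{k→∞} tr(Φ^{∘(k+1)}(C)) / tr(Φ^{∘k}(C)) exists and equals 1 − 1/r. -/

import Mathlib

open Matrix Filter
open scoped ComplexOrder Topology

/-- The map `Φ(C) = C − C²/tr(C)` (with the junk value `C − 0⁻¹ • C² ` irrelevant here,
since `tr(C) ≠ 0` along the iteration for a nonzero PSD matrix of rank ≥ 2). -/
noncomputable def PhiMap {n : ℕ} (C : Matrix (Fin n) (Fin n) ℂ) :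
    Matrix (Fin n) (Fin n) ℂ :=
  C - (Matrix.trace C)⁻¹ • (C * C)

noncomputable def Tmap {n : ℕ} (w : Fin n → ℝ) : Fin n → ℝ :=
  fun i => w i - (∑ j, w j)⁻¹ * w i ^ 2

lemma PhiMap_diagonal {n : ℕ} (w : Fin n → ℝ) :
    PhiMap (Matrix.diagonal fun i => ((w i : ℝ) : ℂ)) =
      Matrix.diagonal fun i => ((Tmap w i : ℝ) : ℂ) := by
  unfold PhiMap Tmap
  rw [Matrix.diagonal_mul_diagonal, Matrix.trace_diagonal]
  ext i j
  rcases eq_or_ne i j with h | h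
  · subst h
    simp only [Matrix.sub_apply, Matrix.smul_apply, Matrix.diagonal_apply_eq, smul_eq_mul]
    push_cast
    ring
  · simp [Matrix.diagonal_apply_ne _ h, h]

lemma PhiMap_conj {n : ℕ} (U A : Matrix (Fin n) (Fin n) ℂ) (hU : star U * U = 1) :
    PhiMap (U * A * star U) = U * PhiMap A * star U := by
  have htr : Matrix.trace (U * A * star U) = Matrix.trace A := by
    rw [Matrix.trace_mul_cycle, hU, one_mul]
  have hmul : U * A * star U * (U * A * star U) = U * (A * A) * star U := by
    calc U * A * star U * (U * A * star U) = U * A * (star U * U) * (A * star U) := by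
          simp only [mul_assoc]
      _ = U * (A * A) * star U := by rw [hU, mul_one]; simp only [mul_assoc]
  unfold PhiMap
  rw [htr, hmul, mul_sub, sub_mul, mul_smul_comm, smul_mul_assoc]

lemma PhiMap_iter_conj {n : ℕ} (U A : Matrix (Fin n) (Fin n) ℂ) (hU : star U * U = 1)
    (k : ℕ) : PhiMap^[k] (U * A * star U) = U * PhiMap^[k] A * star U := by
  induction k with
  | zero => simp
  | succ k ih => rw [Function.iterate_succ_apply', Function.iterate_succ_apply', ih,
      PhiMap_conj _ _ hU]

lemma PhiMap_iter_diagonal {n : ℕ} (w : Fin n → ℝ) (k : ℕ) :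
    PhiMap^[k] (Matrix.diagonal fun i => ((w i : ℝ) : ℂ)) =
      Matrix.diagonal fun i => ((Tmap^[k] w i : ℝ) : ℂ) := by
  induction k with
  | zero => simp
  | succ k ih => rw [Function.iterate_succ_apply', Function.iterate_succ_apply', ih,
      PhiMap_diagonal]

noncomputable def Qm {n : ℕ} (w : Fin n → ℝ) : ℝ := (∑ i, w i ^ 2) / (∑ i, w i) ^ 2

noncomputable def Mu {n : ℕ} (S : Finset (Fin n)) (hne : S.Nonempty) (w : Fin n → ℝ) : ℝ :=
  S.inf' hne w / ∑ i, w i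

lemma mu_step_arith {μ Q a : ℝ} (ha : a ≤ Q) (hb : μ ≤ a) (hc : 0 < μ) (hd : 0 < a)
    (hQ1 : Q < 1) : (μ + μ * (a - μ)) * (1 - Q) ≤ μ * (1 - μ) := by
  have t1 : 0 ≤ μ * ((Q - a) * (1 + a - μ)) :=
    mul_nonneg hc.le (mul_nonneg (sub_nonneg.2 ha) (by linarith))
  have t2 : 0 ≤ μ * (a * (a - μ)) :=
    mul_nonneg hc.le (mul_nonneg hd.le (sub_nonneg.2 hb))
  nlinarith [t1, t2]

set_option maxHeartbeats 1000000 in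
lemma step_all {n : ℕ} {S : Finset (Fin n)} (hne : S.Nonempty) {r : ℕ} (hS : S.card = r)
    (hr : 2 ≤ r) {w : Fin n → ℝ} (h1 : ∀ i, 0 ≤ w i) (h2 : ∀ i, i ∈ S ↔ w i ≠ 0) :
    (∀ i, 0 ≤ Tmap w i) ∧ (∀ i, i ∈ S ↔ Tmap w i ≠ 0)
    ∧ 0 < ∑ i, w i
    ∧ 1/(r:ℝ) ≤ Qm w
    ∧ Qm w ≤ 1 - ((r:ℝ)-1) * Mu S hne w
    ∧ (∑ i, Tmap w i) = (∑ i, w i) * (1 - Qm w)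
    ∧ 0 < Mu S hne w
    ∧ Mu S hne w ≤ 1/(r:ℝ)
    ∧ Mu S hne w + Mu S hne w * (1/(r:ℝ) - Mu S hne w) ≤ Mu S hne (Tmap w) := by
  set s := ∑ i, w i with hs_def
  set m := S.inf' hne w with hm_def
  have hrpos : (0:ℝ) < r := by positivity
  have hwpos : ∀ i ∈ S, 0 < w i := fun i hi => lt_of_le_of_ne (h1 i) (Ne.symm ((h2 i).1 hi))
  have hwzero : ∀ i ∉ S, w i = 0 := by
    intro i hi
    by_contra h
    exact hi ((h2 i).2 h)
  have hspos : 0 < s := by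
    obtain ⟨i0, hi0⟩ := hne
    exact Finset.sum_pos' (fun i _ => h1 i) ⟨i0, Finset.mem_univ i0, hwpos i0 hi0⟩
  have hm : 0 < m := (Finset.lt_inf'_iff hne).2 hwpos
  have hmle : ∀ i ∈ S, m ≤ w i := fun i hi => Finset.inf'_le w hi
  have hsum_supp : ∑ i ∈ S, w i = s := by
    exact Finset.sum_subset (Finset.subset_univ S) (fun i _ hi => hwzero i hi)
  have hsq_supp : ∑ i ∈ S, w i ^ 2 = ∑ i, w i ^ 2 :=
    Finset.sum_subset (Finset.subset_univ S) (fun i _ hi => by rw [hwzero i hi]; ring)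
  have hrm : (r:ℝ) * m ≤ s := by
    have := Finset.card_nsmul_le_sum S w m hmle
    rw [hS] at this
    rw [← hsum_supp]
    simpa [nsmul_eq_mul] using this
  have hub : ∀ i, w i ≤ s - ((r:ℝ)-1) * m := by
    intro i
    by_cases hi : i ∈ S
    · have hcard : (S.erase i).card = r - 1 := by rw [Finset.card_erase_of_mem hi, hS]
      have hsum_erase : ∑ j ∈ S.erase i, w j = s - w i := by
        have := Finset.add_sum_erase S w hi
        rw [hsum_supp] at this
        linarith
      have hge : ((r:ℝ) - 1) * m ≤ ∑ j ∈ S.erase i, w j := by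
        have h := Finset.card_nsmul_le_sum (S.erase i) w m
          (fun j hj => hmle j (Finset.mem_of_mem_erase hj))
        rw [hcard] at h
        have hc : ((r - 1 : ℕ) : ℝ) = (r:ℝ) - 1 := by
          have : 1 ≤ r := le_trans (by norm_num) hr
          push_cast [Nat.cast_sub this]
          ring
        calc ((r:ℝ) - 1) * m = ((r-1:ℕ):ℝ) * m := by rw [hc]
          _ ≤ ∑ j ∈ S.erase i, w j := by simpa [nsmul_eq_mul] using h
      linarith
    · rw [hwzero i hi]
      nlinarith
  have hq1 : 1/(r:ℝ) ≤ Qm w := by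
    have hcs : (∑ i ∈ S, w i) ^ 2 ≤ S.card * ∑ i ∈ S, w i ^ 2 :=
      sq_sum_le_card_mul_sum_sq
    rw [hsum_supp, hsq_supp, hS] at hcs
    rw [Qm, div_le_div_iff₀ hrpos (by positivity)]
    linarith
  have hQnonneg : 0 ≤ Qm w := le_trans (by positivity) hq1
  have hsub : Qm w ≤ 1 - ((r:ℝ)-1) * Mu S hne w := by
    have hsum_sq : ∑ i, w i ^ 2 ≤ (s - ((r:ℝ)-1) * m) * s := by
      calc ∑ i, w i ^ 2 = ∑ i, w i * w i := by simp [sq]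
        _ ≤ ∑ i, (s - ((r:ℝ)-1)*m) * w i :=
          Finset.sum_le_sum (fun i _ => mul_le_mul_of_nonneg_right (hub i) (h1 i))
        _ = (s - ((r:ℝ)-1) * m) * s := by rw [← Finset.mul_sum]
    rw [Qm, Mu, div_le_iff₀ (by positivity)]
    have : (1 - ((r:ℝ)-1) * (m / s)) * s ^ 2 = (s - ((r:ℝ)-1) * m) * s := by
      field_simp
    rw [← hm_def, ← hs_def, this]
    exact hsum_sq
  have hmupos : 0 < Mu S hne w := div_pos hm hspos
  have hmule : Mu S hne w ≤ 1/(r:ℝ) := by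
    rw [Mu, div_le_div_iff₀ hspos hrpos]
    linarith [hrm]
  have hQlt1 : Qm w < 1 := by
    have h1r : (1:ℝ) ≤ (r:ℝ) - 1 := by
      have : (2:ℝ) ≤ (r:ℝ) := by exact_mod_cast hr
      linarith
    nlinarith [hsub, hmupos]
  have hsum' : (∑ i, Tmap w i) = s * (1 - Qm w) := by
    have : (∑ i, Tmap w i) = s - s⁻¹ * ∑ i, w i ^ 2 := by
      simp only [Tmap]
      rw [Finset.sum_sub_distrib, ← Finset.mul_sum, ← hs_def]
    rw [this, Qm, ← hs_def]
    field_simp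
  -- pointwise formula and lower bound on the support
  have hTform : ∀ i, Tmap w i = w i * (s - w i) / s := by
    intro i
    rw [Tmap, ← hs_def]
    field_simp
  have hwub : ∀ i, w i ≤ s - m := by
    intro i
    have := hub i
    have h1r : (1:ℝ) ≤ (r:ℝ) - 1 := by
      have : (2:ℝ) ≤ (r:ℝ) := by exact_mod_cast hr
      linarith
    nlinarith
  have hlow : ∀ i ∈ S, m * (s - m) / s ≤ Tmap w i := by
    intro i hi
    rw [hTform i]
    have hx : m * (s - m) ≤ w i * (s - w i) := by nlinarith [hmle i hi, hwub i]
    exact div_le_div_of_nonneg_right hx hspos.le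
  have hlowpos : 0 < m * (s - m) / s := by
    have h2r : (2:ℝ) ≤ (r:ℝ) := by exact_mod_cast hr
    have : m < s := by nlinarith [hrm]
    apply div_pos (mul_pos hm (by linarith)) hspos
  have hTzero : ∀ i ∉ S, Tmap w i = 0 := by
    intro i hi
    rw [hTform i, hwzero i hi]
    simp
  have hTpos : ∀ i ∈ S, 0 < Tmap w i := fun i hi => lt_of_lt_of_le hlowpos (hlow i hi)
  have hTnonneg : ∀ i, 0 ≤ Tmap w i := by
    intro i
    by_cases hi : i ∈ S
    · exact (hTpos i hi).le
    · rw [hTzero i hi]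
  have hTsupp : ∀ i, i ∈ S ↔ Tmap w i ≠ 0 := by
    intro i
    constructor
    · exact fun hi => (hTpos i hi).ne'
    · intro h
      by_contra hi
      exact h (hTzero i hi)
  -- the new minimum
  have hnewinf : m * (s - m) / s ≤ S.inf' hne (Tmap w) := Finset.le_inf' hne _ hlow
  have hnewsum : (∑ i, Tmap w i) = s * (1 - Qm w) := hsum'
  have hspos' : 0 < ∑ i, Tmap w i := by
    rw [hnewsum]
    exact mul_pos hspos (by linarith [hQlt1])
  have hmu_step : Mu S hne w + Mu S hne w * (1/(r:ℝ) - Mu S hne w) ≤ Mu S hne (Tmap w) := by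
    set μ := Mu S hne w with hμ
    have hμ_eq : μ = m / s := rfl
    have hQ := hq1
    have hQ1 := hQlt1
    have key : μ + μ * (1/(r:ℝ) - μ) ≤ (m * (s - m) / s) / (s * (1 - Qm w)) := by
      have hrhs : (m * (s - m) / s) / (s * (1 - Qm w)) = μ * (1 - μ) / (1 - Qm w) := by
        rw [hμ_eq]
        field_simp
      rw [hrhs]
      rw [le_div_iff₀ (by linarith)]
      have ha : 1/(r:ℝ) ≤ Qm w := hq1
      have hb : μ ≤ 1/(r:ℝ) := hmule
      have hc : 0 < μ := hmupos
      have hd : 0 < 1/(r:ℝ) := by positivity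
      exact mu_step_arith ha hb hc hd hQ1
    refine key.trans ?_
    rw [Mu, ← hnewsum]
    exact div_le_div_of_nonneg_right hnewinf hspos'.le
  exact ⟨hTnonneg, hTsupp, hspos, hq1, hsub, hsum', hmupos, hmule, hmu_step⟩

lemma key_tendsto {n : ℕ} (v : Fin n → ℝ) (hv : ∀ i, 0 ≤ v i) (r : ℕ) (hr : 2 ≤ r)
    (hcard : (Finset.univ.filter (fun i => v i ≠ 0)).card = r) :
    Filter.Tendsto (fun k : ℕ => (∑ i, Tmap^[k+1] v i) / (∑ i, Tmap^[k] v i)) Filter.atTop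
      (𝓝 (1 - 1/(r:ℝ))) := by
  classical
  set S := Finset.univ.filter (fun i => v i ≠ 0) with hS_def
  have hS : S.card = r := hcard
  have hne : S.Nonempty := Finset.card_pos.1 (by rw [hS]; omega)
  have hmem : ∀ i, i ∈ S ↔ v i ≠ 0 := by
    intro i; simp [hS_def]
  have hrpos : (0:ℝ) < r := by positivity
  -- the invariant
  have inv : ∀ k, (∀ i, 0 ≤ Tmap^[k] v i) ∧ (∀ i, i ∈ S ↔ Tmap^[k] v i ≠ 0) := by
    intro k
    induction k with
    | zero => exact ⟨hv, hmem⟩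
    | succ k ih =>
      have h := step_all hne hS hr ih.1 ih.2
      rw [Function.iterate_succ_apply']
      exact ⟨h.1, h.2.1⟩
  have step := fun k => step_all hne hS hr (inv k).1 (inv k).2
  set μ : ℕ → ℝ := fun k => Mu S hne (Tmap^[k] v) with hμ_def
  set q : ℕ → ℝ := fun k => Qm (Tmap^[k] v) with hq_def
  have hiter : ∀ k, Tmap^[k+1] v = Tmap (Tmap^[k] v) := fun k =>
    Function.iterate_succ_apply' Tmap k v
  have hμpos : ∀ k, 0 < μ k := fun k => (step k).2.2.2.2.2.2.1
  have hμle : ∀ k, μ k ≤ 1/(r:ℝ) := fun k => (step k).2.2.2.2.2.2.2.1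
  have hμstep : ∀ k, μ k + μ k * (1/(r:ℝ) - μ k) ≤ μ (k+1) := by
    intro k
    have h := (step k).2.2.2.2.2.2.2.2
    rw [hμ_def]
    simp only
    rw [hiter k]
    exact h
  have hμmono : ∀ k, μ k ≤ μ (k+1) := by
    intro k
    have := hμstep k
    nlinarith [hμpos k, hμle k]
  have hμ0 : ∀ k, μ 0 ≤ μ k := by
    intro k
    induction k with
    | zero => exact le_rfl
    | succ k ih => exact ih.trans (hμmono k)
  have hμ0pos : 0 < μ 0 := hμpos 0
  have hμ0lt1 : μ 0 < 1 := lt_of_le_of_lt (hμle 0) (by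
    rw [div_lt_one hrpos]; exact_mod_cast lt_of_lt_of_le one_lt_two hr)
  have hgap : ∀ k, 1/(r:ℝ) - μ k ≤ (1 - μ 0)^k * (1/(r:ℝ) - μ 0) := by
    intro k
    induction k with
    | zero => simp
    | succ k ih =>
      have h1 : 1/(r:ℝ) - μ (k+1) ≤ (1/(r:ℝ) - μ k) * (1 - μ 0) := by
        have h2 := hμstep k
        have h3 : 0 ≤ 1/(r:ℝ) - μ k := by linarith [hμle k]
        have h4 := hμ0 k
        nlinarith [hμpos k]
      calc 1/(r:ℝ) - μ (k+1) ≤ (1/(r:ℝ) - μ k) * (1 - μ 0) := h1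
        _ ≤ ((1 - μ 0)^k * (1/(r:ℝ) - μ 0)) * (1 - μ 0) := by
            have : (0:ℝ) ≤ 1 - μ 0 := by linarith
            nlinarith [ih]
        _ = (1 - μ 0)^(k+1) * (1/(r:ℝ) - μ 0) := by ring
  have hpowlim : Filter.Tendsto (fun k : ℕ => (1 - μ 0)^k * (1/(r:ℝ) - μ 0))
      Filter.atTop (𝓝 0) := by
    have := tendsto_pow_atTop_nhds_zero_of_lt_one (by linarith : (0:ℝ) ≤ 1 - μ 0)
      (by linarith : 1 - μ 0 < 1)
    simpa using this.mul_const (1/(r:ℝ) - μ 0)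
  have hlowlim : Filter.Tendsto (fun k : ℕ => 1/(r:ℝ) - (1 - μ 0)^k * (1/(r:ℝ) - μ 0))
      Filter.atTop (𝓝 (1/(r:ℝ))) := by
    have h := Filter.Tendsto.const_sub (1/(r:ℝ)) hpowlim
    rw [sub_zero] at h
    exact h
  have hμlim : Filter.Tendsto μ Filter.atTop (𝓝 (1/(r:ℝ))) :=
    tendsto_of_tendsto_of_tendsto_of_le_of_le hlowlim
      (tendsto_const_nhds : Filter.Tendsto (fun _ : ℕ => 1/(r:ℝ)) Filter.atTop _)
      (fun k => by linarith [hgap k]) (fun k => hμle k)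
  have hqlim : Filter.Tendsto q Filter.atTop (𝓝 (1/(r:ℝ))) := by
    have hub : Filter.Tendsto (fun k => 1 - ((r:ℝ)-1) * μ k) Filter.atTop (𝓝 (1/(r:ℝ))) := by
      have := Filter.Tendsto.const_sub 1 (Filter.Tendsto.const_mul ((r:ℝ)-1) hμlim)
      convert this using 2
      field_simp
      ring
    exact tendsto_of_tendsto_of_tendsto_of_le_of_le tendsto_const_nhds hub
      (fun k => (step k).2.2.2.1) (fun k => (step k).2.2.2.2.1)
  have hratio : ∀ k, (∑ i, Tmap^[k+1] v i) / (∑ i, Tmap^[k] v i) = 1 - q k := by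
    intro k
    have hsum := (step k).2.2.2.2.2.1
    have hpos := (step k).2.2.1
    rw [hiter k, hsum]
    exact mul_div_cancel_left₀ _ (ne_of_gt hpos)
  have : Filter.Tendsto (fun k => 1 - q k) Filter.atTop (𝓝 (1 - 1/(r:ℝ))) :=
    Filter.Tendsto.const_sub 1 hqlim
  exact this.congr (fun k => (hratio k).symm)

/-- **Theorem (asymptotic trace ratio of the Φ-dynamics).**
For any PSD matrix `C ∈ ℂ^{n×n}` of rank `r ≥ 2`,
`lim_{k→∞} tr(Φ^{∘(k+1)}(C)) / tr(Φ^{∘k}(C)) = 1 − 1/r`. -/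
theorem trace_ratio_tendsto {n : ℕ} (C : Matrix (Fin n) (Fin n) ℂ)
    (hC : C.PosSemidef) (r : ℕ) (hrank : C.rank = r) (hr : 2 ≤ r) :
    Tendsto
      (fun k : ℕ =>
        (Matrix.trace (PhiMap^[k + 1] C)).re / (Matrix.trace (PhiMap^[k] C)).re)
      atTop (𝓝 (1 - 1 / (r : ℝ))) := by
  classical
  have hH : C.IsHermitian := hC.1
  set E := hH.eigenvalues with hE_def
  set U : Matrix (Fin n) (Fin n) ℂ := (hH.eigenvectorUnitary : Matrix (Fin n) (Fin n) ℂ)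
    with hU_def
  have hUU : star U * U = 1 := by
    rw [hU_def]
    exact (Unitary.mem_iff.mp hH.eigenvectorUnitary.2).1
  have hspec : C = U * Matrix.diagonal (fun i => ((E i : ℝ) : ℂ)) * star U := by
    have h := hH.spectral_theorem
    exact h
  have htrace : ∀ k, Matrix.trace (PhiMap^[k] C) = ((∑ i, Tmap^[k] E i : ℝ) : ℂ) := by
    intro k
    conv_lhs => rw [hspec]
    rw [PhiMap_iter_conj _ _ hUU, PhiMap_iter_diagonal, Matrix.trace_mul_cycle,
      hUU, one_mul, Matrix.trace_diagonal]
    push_cast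
    rfl
  have hnonneg : ∀ i, 0 ≤ E i := fun i => hC.eigenvalues_nonneg i
  have hcard : (Finset.univ.filter (fun i => E i ≠ 0)).card = r := by
    have h1 := hH.rank_eq_card_non_zero_eigs
    rw [hrank, Fintype.card_subtype] at h1
    exact h1.symm
  have hkey := key_tendsto E hnonneg r hr hcard
  exact hkey.congr (fun k => by
    rw [htrace k, htrace (k+1)]
    simp)
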